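/- Let V be a finite-dimensional real vector space with a nondegenerate symmetric bilinear form B, and let E : V → V be a linear involution symmetric with respect to B (i.e. B(x, Ey) = B(Ex, y) for all x,y). Suppose F ⊆ V is a subspace such that E(F) is a complement to the orthogonal complement F^⊥ in V (i.e. V = F^⊥ ⊕ E(F)). Then the restriction of the bilinear form (x,y) ↦ B(x, Ey) to F is nondegenerate. -/

import Mathlib

/-- If `B` is a nondegenerate symmetric bilinear form on a finite-dimensional real vector
space `V`, `E` is a `B`-symmetric linear involution, and `F` is a subspace such that
`V = F^⊥ ⊕ E(F)`, then the restriction to `F` of the bilinear form `(x, y) ↦ B x (E y)`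
is nondegenerate. -/
theorem stmt_1 {V : Type*} [AddCommGroup V] [Module ℝ V] [FiniteDimensional ℝ V]
    (B : LinearMap.BilinForm ℝ V) (hBnd : B.Nondegenerate)
    (hBsymm : ∀ x y, B x y = B y x)
    (E : V →ₗ[ℝ] V) (hE : E ∘ₗ E = LinearMap.id)
    (hEsymm : ∀ x y, B x (E y) = B (E x) y)
    (F : Submodule ℝ V)
    (hcompl : IsCompl (B.orthogonal F) (F.map E)) :
    ∀ x ∈ F, (∀ y ∈ F, B x (E y) = 0) → x = 0 := by
  intro x hx hxy
  have hmem : E x ∈ B.orthogonal F ⊓ F.map E := by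
    constructor
    · intro y hy
      have := hEsymm y x
      show B y (E x) = 0
      rw [this, hBsymm, hxy y hy]
    · exact ⟨x, hx, rfl⟩
  have hEx0 : E x = 0 := by
    rw [hcompl.inf_eq_bot] at hmem
    simpa using hmem
  have : E (E x) = x := by
    have := congrArg (fun f => f x) hE
    simpa using this
  rw [← this, hEx0, map_zero]
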